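/- The surface 𝒮 = {(x,y,z) ∈ ℂ³ | x² − y²·z = 1}, equipped with the subspace topology from ℂ³, is simply connected (i.e., it is path-connected and its fundamental group is trivial). -/

import Mathlib

open Set unitInterval

noncomputable section

namespace Stmt10Aux

variable {X : Type*} [TopologicalSpace X]

/-- Shorthand homotopic facts -/
theorem ht_assoc {a b c d : X} (p : Path a b) (q : Path b c) (r : Path c d) :
    ((p.trans q).trans r).Homotopic (p.trans (q.trans r)) :=
  ⟨Path.Homotopy.transAssoc p q r⟩

theorem ht_reflTrans {a b : X} (p : Path a b) :
    ((Path.refl a).trans p).Homotopic p :=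
  ⟨Path.Homotopy.reflTrans p⟩

theorem ht_transRefl {a b : X} (p : Path a b) :
    (p.trans (Path.refl b)).Homotopic p :=
  ⟨Path.Homotopy.transRefl p⟩

theorem ht_symmTrans {a b : X} (p : Path a b) :
    (p.symm.trans p).Homotopic (Path.refl b) :=
  ⟨(Path.Homotopy.reflSymmTrans p).symm⟩

theorem ht_transSymm {a b : X} (p : Path a b) :
    (p.trans p.symm).Homotopic (Path.refl a) :=
  ⟨(Path.Homotopy.reflTransSymm p).symm⟩

theorem homotopic_cast {x y x' y' : X} {p q : Path x y} (h : p.Homotopic q)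
    (hx : x' = x) (hy : y' = y) : (p.cast hx hy).Homotopic (q.cast hx hy) := by
  subst hx; subst hy
  have h1 : p.cast rfl rfl = p := by ext t; rfl
  have h2 : q.cast rfl rfl = q := by ext t; rfl
  rwa [h1, h2]

/-- Any two paths with the same endpoints contained in a simply connected subset are
homotopic (in the ambient space). -/
theorem homotopic_of_range_subset {s : Set X} [SimplyConnectedSpace s] {x y : X}
    (p q : Path x y) (hp : Set.range p ⊆ s) (hq : Set.range q ⊆ s) : p.Homotopic q := by
  have hx : x ∈ s := by rw [← p.source]; exact hp ⟨0, rfl⟩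
  have hy : y ∈ s := by rw [← p.target]; exact hp ⟨1, rfl⟩
  let p' : Path (⟨x, hx⟩ : s) ⟨y, hy⟩ :=
    { toFun := fun t => ⟨p t, hp (Set.mem_range_self t)⟩
      continuous_toFun := p.continuous.subtype_mk _
      source' := Subtype.ext p.source
      target' := Subtype.ext p.target }
  let q' : Path (⟨x, hx⟩ : s) ⟨y, hy⟩ :=
    { toFun := fun t => ⟨q t, hq (Set.mem_range_self t)⟩
      continuous_toFun := q.continuous.subtype_mk _
      source' := Subtype.ext q.source
      target' := Subtype.ext q.target }
  have h : p'.Homotopic q' := SimplyConnectedSpace.paths_homotopic p' q'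
  have h2 := h.map (f := ⟨Subtype.val, continuous_subtype_val⟩)
  have e1 : p'.map continuous_subtype_val = p := by ext t; rfl
  have e2 : q'.map continuous_subtype_val = q := by ext t; rfl
  rw [e1, e2] at h2
  exact h2

/-- The canonical subpath of `γ` between parameters `s ≤ u`. -/
def seg {a b : X} (γ : Path a b) (s u : I) (h : s ≤ u) : Path (γ s) (γ u) :=
  (γ.truncate s u).cast
    (by rw [min_eq_left (show (s : ℝ) ≤ (u : ℝ) from h), γ.extend_extends'])
    (γ.extend_extends' u).symm

theorem seg_apply {a b : X} (γ : Path a b) (s u : I) (h : s ≤ u) (r : I) :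
    seg γ s u h r = γ.extend (min (max (r : ℝ) (s : ℝ)) (u : ℝ)) := rfl

theorem seg_range {a b : X} (γ : Path a b) (s u : I) (h : s ≤ u) :
    Set.range (seg γ s u h) ⊆ γ '' Set.Icc s u := by
  rintro - ⟨r, rfl⟩
  have h1 : min (max (r : ℝ) (s : ℝ)) (u : ℝ) ∈ Set.Icc (s : ℝ) (u : ℝ) :=
    ⟨le_min (le_max_right _ _) h, min_le_right _ _⟩
  have h2 : min (max (r : ℝ) (s : ℝ)) (u : ℝ) ∈ I :=
    ⟨le_trans s.2.1 h1.1, le_trans h1.2 u.2.2⟩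
  refine ⟨⟨_, h2⟩, ⟨h1.1, h1.2⟩, ?_⟩
  rw [seg_apply]
  exact (γ.extend_extends' ⟨_, h2⟩).symm


/-- Splitting a segment at an intermediate time, up to homotopy. -/
theorem seg_split {a b : X} (γ : Path a b) {t₀ t₁ t₂ : I} (h01 : t₀ ≤ t₁) (h12 : t₁ ≤ t₂) :
    (seg γ t₀ t₂ (h01.trans h12)).Homotopic
      ((seg γ t₀ t₁ h01).trans (seg γ t₁ t₂ h12)) := by
  have ht₁0 : (0:ℝ) ≤ (t₁ : ℝ) := t₁.2.1
  have ht₁1 : (t₁ : ℝ) ≤ 1 := t₁.2.2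
  have hf_mem : ∀ r : I, max (min (2 * (r:ℝ)) (t₁:ℝ)) (2 * (r:ℝ) - 1) ∈ I := by
    intro r
    constructor
    · exact le_trans (le_min (by linarith [r.2.1]) ht₁0) (le_max_left _ _)
    · exact max_le (le_trans (min_le_right _ _) ht₁1) (by linarith [r.2.2])
  set f : I → I := fun r => ⟨max (min (2 * (r:ℝ)) (t₁:ℝ)) (2 * (r:ℝ) - 1), hf_mem r⟩ with hf_def
  have hf : Continuous f := by
    apply Continuous.subtype_mk
    fun_prop
  have hf0 : f 0 = 0 := by
    apply Subtype.ext
    show max (min (2 * ((0:I):ℝ)) (t₁:ℝ)) (2 * ((0:I):ℝ) - 1) = 0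
    rw [show ((0:I):ℝ) = 0 from rfl]
    rw [show (2:ℝ) * 0 = 0 by ring, min_eq_left ht₁0]
    rw [max_eq_left (by norm_num)]
  have hf1 : f 1 = 1 := by
    apply Subtype.ext
    show max (min (2 * ((1:I):ℝ)) (t₁:ℝ)) (2 * ((1:I):ℝ) - 1) = 1
    rw [show ((1:I):ℝ) = 1 from rfl]
    rw [show (2:ℝ) * 1 = 2 by ring, min_eq_right (by linarith)]
    rw [max_eq_right (by linarith)]
    norm_num
  have H := Path.Homotopy.reparam (seg γ t₀ t₂ (h01.trans h12)) f hf hf0 hf1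
  have heq : (seg γ t₀ t₂ (h01.trans h12)).reparam f hf hf0 hf1 =
      (seg γ t₀ t₁ h01).trans (seg γ t₁ t₂ h12) := by
    ext r
    have hr0 : (0:ℝ) ≤ (r:ℝ) := r.2.1
    have hr1 : (r:ℝ) ≤ 1 := r.2.2
    have ht₀0 : (0:ℝ) ≤ (t₀ : ℝ) := t₀.2.1
    have h01' : (t₀:ℝ) ≤ (t₁:ℝ) := h01
    have h12' : (t₁:ℝ) ≤ (t₂:ℝ) := h12
    have ht₂1 : (t₂ : ℝ) ≤ 1 := t₂.2.2
    show (seg γ t₀ t₂ (h01.trans h12)) (f r) = ((seg γ t₀ t₁ h01).trans (seg γ t₁ t₂ h12)) r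
    rw [Path.trans_apply]
    split_ifs with hr
    · rw [seg_apply, seg_apply]
      congr 1
      show min (max (max (min (2*(r:ℝ)) (t₁:ℝ)) (2*(r:ℝ)-1)) (t₀:ℝ)) (t₂:ℝ)
          = min (max (2*(r:ℝ)) (t₀:ℝ)) (t₁:ℝ)
      have e1 : max (min (2*(r:ℝ)) (t₁:ℝ)) (2*(r:ℝ)-1) = min (2*(r:ℝ)) (t₁:ℝ) :=
        max_eq_left (le_min (by linarith) (by linarith))
      rw [e1]
      simp only [min_def, max_def]
      split_ifs <;> linarith
    · rw [seg_apply, seg_apply]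
      congr 1
      show min (max (max (min (2*(r:ℝ)) (t₁:ℝ)) (2*(r:ℝ)-1)) (t₀:ℝ)) (t₂:ℝ)
          = min (max (2*(r:ℝ)-1) (t₁:ℝ)) (t₂:ℝ)
      push_neg at hr
      have e2 : min (2*(r:ℝ)) (t₁:ℝ) = (t₁:ℝ) := min_eq_right (by linarith)
      rw [e2]
      simp only [min_def, max_def]
      split_ifs <;> linarith
  exact ⟨H.cast rfl heq⟩


/-- If all loops based at `x₀` are null-homotopic and `x₀` is joined to everything,
then any two paths with the same endpoints are homotopic. -/
theorem paths_homotopic_of_loops {x₀ : X}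
    (hloop : ∀ γ : Path x₀ x₀, γ.Homotopic (Path.refl x₀))
    {x y : X} (c : Path x₀ x) (p q : Path x y) : p.Homotopic q := by
  set R : Path x x := p.trans q.symm with hR
  set L : Path x₀ x₀ := c.trans (R.trans c.symm) with hL
  -- R ~ c.symm.trans (L.trans c)
  have h1 : R.Homotopic (c.symm.trans (L.trans c)) := by
    have s1 : R.Homotopic ((Path.refl x).trans R) := (ht_reflTrans R).symm
    have s2 : ((Path.refl x).trans R).Homotopic ((c.symm.trans c).trans R) :=
      Path.Homotopic.hcomp ⟨Path.Homotopy.reflSymmTrans c⟩ (Path.Homotopic.refl R)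
    have s3 : ((c.symm.trans c).trans R).Homotopic (c.symm.trans (c.trans R)) :=
      ht_assoc _ _ _
    have s4 : (c.symm.trans (c.trans R)).Homotopic
        (c.symm.trans (c.trans (R.trans (Path.refl x)))) :=
      Path.Homotopic.hcomp (Path.Homotopic.refl _)
        (Path.Homotopic.hcomp (Path.Homotopic.refl c) (ht_transRefl R).symm)
    have s5 : (c.symm.trans (c.trans (R.trans (Path.refl x)))).Homotopic
        (c.symm.trans (c.trans (R.trans (c.symm.trans c)))) :=
      Path.Homotopic.hcomp (Path.Homotopic.refl _)
        (Path.Homotopic.hcomp (Path.Homotopic.refl c)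
          (Path.Homotopic.hcomp (Path.Homotopic.refl R)
            ⟨Path.Homotopy.reflSymmTrans c⟩))
    have s6 : (c.symm.trans (c.trans (R.trans (c.symm.trans c)))).Homotopic
        (c.symm.trans (c.trans ((R.trans c.symm).trans c))) :=
      Path.Homotopic.hcomp (Path.Homotopic.refl _)
        (Path.Homotopic.hcomp (Path.Homotopic.refl c) (ht_assoc _ _ _).symm)
    have s7 : (c.symm.trans (c.trans ((R.trans c.symm).trans c))).Homotopic
        (c.symm.trans ((c.trans (R.trans c.symm)).trans c)) :=
      Path.Homotopic.hcomp (Path.Homotopic.refl _) (ht_assoc _ _ _).symm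
    exact ((((((s1.trans s2).trans s3).trans s4).trans s5).trans s6).trans s7)
  have h2 : (c.symm.trans (L.trans c)).Homotopic (Path.refl x) := by
    have s1 : (c.symm.trans (L.trans c)).Homotopic
        (c.symm.trans ((Path.refl x₀).trans c)) :=
      Path.Homotopic.hcomp (Path.Homotopic.refl _)
        (Path.Homotopic.hcomp (hloop L) (Path.Homotopic.refl c))
    have s2 : (c.symm.trans ((Path.refl x₀).trans c)).Homotopic (c.symm.trans c) :=
      Path.Homotopic.hcomp (Path.Homotopic.refl _) (ht_reflTrans c)
    exact (s1.trans s2).trans (ht_symmTrans c)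
  have hR0 : R.Homotopic (Path.refl x) := (h1.trans h2)
  have s1 : p.Homotopic (p.trans (Path.refl y)) := (ht_transRefl p).symm
  have s2 : (p.trans (Path.refl y)).Homotopic (p.trans (q.symm.trans q)) :=
    Path.Homotopic.hcomp (Path.Homotopic.refl p) ⟨Path.Homotopy.reflSymmTrans q⟩
  have s3 : (p.trans (q.symm.trans q)).Homotopic ((p.trans q.symm).trans q) :=
    (ht_assoc _ _ _).symm
  have s4 : ((p.trans q.symm).trans q).Homotopic ((Path.refl x).trans q) :=
    Path.Homotopic.hcomp hR0 (Path.Homotopic.refl q)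
  exact (((s1.trans s2).trans s3).trans s4).trans (ht_reflTrans q)

/-- Van Kampen style criterion: a union of two simply connected open sets
with path-connected intersection is simply connected. -/
theorem simplyConnectedSpace_of_union (U V : Set X)
    (hUo : IsOpen U) (hVo : IsOpen V) (hUV : U ∪ V = Set.univ)
    [SimplyConnectedSpace U] [SimplyConnectedSpace V]
    (hpc : IsPathConnected (U ∩ V)) : SimplyConnectedSpace X := by
  obtain ⟨x₀, hx₀, -⟩ := id hpc
  have hx₀U : x₀ ∈ U := hx₀.1
  have hx₀V : x₀ ∈ V := hx₀.2
  have hUpc : IsPathConnected U := isPathConnected_iff_pathConnectedSpace.mpr inferInstance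
  have hVpc : IsPathConnected V := isPathConnected_iff_pathConnectedSpace.mpr inferInstance
  have hXpc : PathConnectedSpace X := by
    rw [pathConnectedSpace_iff_univ, ← hUV]
    exact hUpc.union hVpc ⟨x₀, hx₀⟩
  rw [simply_connected_iff_paths_homotopic']
  refine ⟨hXpc, ?_⟩
  have hmemUV : ∀ p : X, p ∈ U ∪ V := fun p => hUV ▸ Set.mem_univ p
  -- `Good` paths: lying in U whenever target is in U, in V whenever target in V
  have choice : ∀ p : X, ∃ W : Path x₀ p,
      (p ∈ U → Set.range W ⊆ U) ∧ (p ∈ V → Set.range W ⊆ V) := by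
    intro p
    by_cases hUV' : p ∈ U ∩ V
    · refine ⟨(hpc.joinedIn x₀ hx₀ p hUV').somePath, fun _ => ?_, fun _ => ?_⟩ <;>
        · rintro - ⟨r, rfl⟩
          first
            | exact ((hpc.joinedIn x₀ hx₀ p hUV').somePath_mem r).1
            | exact ((hpc.joinedIn x₀ hx₀ p hUV').somePath_mem r).2
    · rcases hmemUV p with hp | hp
      · have hpV : p ∉ V := fun h => hUV' ⟨hp, h⟩
        refine ⟨(hUpc.joinedIn x₀ hx₀U p hp).somePath, fun _ => ?_, fun h => absurd h hpV⟩
        rintro - ⟨r, rfl⟩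
        exact (hUpc.joinedIn x₀ hx₀U p hp).somePath_mem r
      · have hpU : p ∉ U := fun h => hUV' ⟨h, hp⟩
        refine ⟨(hVpc.joinedIn x₀ hx₀V p hp).somePath, fun h => absurd h hpU, fun _ => ?_⟩
        rintro - ⟨r, rfl⟩
        exact (hVpc.joinedIn x₀ hx₀V p hp).somePath_mem r
  have key : ∀ γ : Path x₀ x₀, γ.Homotopic (Path.refl x₀) := by
    intro γ
    -- open cover of I
    set c : Bool → Set I := fun b => γ ⁻¹' (if b then U else V) with hc
    have hc1 : ∀ b, IsOpen (c b) := by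
      intro b
      apply IsOpen.preimage γ.continuous
      cases b <;> simpa using (by first | exact hVo | exact hUo)
    have hc2 : Set.univ ⊆ ⋃ b, c b := by
      intro r _
      rcases hmemUV (γ r) with h | h
      · exact Set.mem_iUnion.mpr ⟨true, by simpa [hc] using h⟩
      · exact Set.mem_iUnion.mpr ⟨false, by simpa [hc] using h⟩
    obtain ⟨t, ht0, htmono, ⟨n₀, hn₀⟩, hsub⟩ :=
      exists_monotone_Icc_subset_open_cover_unitInterval hc1 hc2
    -- canonical "tail" paths
    have hle1 : ∀ m : ℕ, t m ≤ 1 := fun m => le_one'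
    set segc : ∀ m : ℕ, Path (γ (t m)) x₀ :=
      fun m => (seg γ (t m) 1 (hle1 m)).cast rfl γ.target.symm with hsegc
    have main : ∀ j m, n₀ ≤ m + j → ∀ W : Path x₀ (γ (t m)),
        (γ (t m) ∈ U → Set.range W ⊆ U) → (γ (t m) ∈ V → Set.range W ⊆ V) →
        (W.trans (segc m)).Homotopic (Path.refl x₀) := by
      intro j
      induction j with
      | zero =>
        intro m hm W hWU _
        have htm : t m = 1 := hn₀ m (by omega)
        have hend : γ (t m) ∈ U := by rw [htm, γ.target]; exact hx₀U
        have hrW : Set.range W ⊆ U := hWU hend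
        have hrs : Set.range (segc m) ⊆ U := by
          rintro - ⟨r, rfl⟩
          have : (segc m) r = x₀ := by
            show (seg γ (t m) 1 (hle1 m)) r = x₀
            rw [seg_apply, htm]
            rw [show ((1:I):ℝ) = 1 from rfl, max_eq_right r.2.2, min_self, γ.extend_one]
          rw [this]; exact hx₀U
        refine homotopic_of_range_subset (s := U) _ _ ?_ ?_
        · rw [Path.trans_range]; exact Set.union_subset hrW hrs
        · rw [Path.refl_range]; exact Set.singleton_subset_iff.mpr hx₀U
      | succ j ih =>
        intro m hm W hWU hWV
        have hstep : ∀ s : Set X, SimplyConnectedSpace s → x₀ ∈ s →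
            (∀ (p : X) (W' : Path x₀ p),
              (p ∈ U → Set.range W' ⊆ U) → (p ∈ V → Set.range W' ⊆ V) → p ∈ s →
                Set.range W' ⊆ s) →
            (∀ r : I, r ∈ Set.Icc (t m) (t (m+1)) → γ r ∈ s) →
            (W.trans (segc m)).Homotopic (Path.refl x₀) := by
          intro s hsc hx₀s hGs hseg
          haveI := hsc
          have hmm1 : t m ≤ t (m+1) := htmono (Nat.le_succ m)
          have hme : γ (t m) ∈ s := hseg _ ⟨le_rfl, hmm1⟩
          have hm1e : γ (t (m+1)) ∈ s := hseg _ ⟨hmm1, le_rfl⟩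
          obtain ⟨W', hW'U, hW'V⟩ := choice (γ (t (m+1)))
          have hIH := ih (m+1) (by omega) W' hW'U hW'V
          set sg : Path (γ (t m)) (γ (t (m+1))) := seg γ (t m) (t (m+1)) hmm1 with hsg
          have hrsg : Set.range sg ⊆ s := by
            refine subset_trans (seg_range γ _ _ _) ?_
            rintro - ⟨r, hr, rfl⟩
            exact hseg r hr
          have hrW : Set.range W ⊆ s := hGs _ W hWU hWV hme
          have hrW' : Set.range W' ⊆ s := hGs _ W' hW'U hW'V hm1e
          have hβ : (W.trans (sg.trans W'.symm)).Homotopic (Path.refl x₀) := by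
            refine homotopic_of_range_subset (s := s) _ _ ?_ ?_
            · rw [Path.trans_range, Path.trans_range, Path.symm_range]
              exact Set.union_subset hrW (Set.union_subset hrsg hrW')
            · rw [Path.refl_range]; exact Set.singleton_subset_iff.mpr hx₀s
          -- split the tail
          have h1 : (segc m).Homotopic (sg.trans (segc (m+1))) := by
            have h0 := seg_split γ hmm1 (hle1 (m+1))
            have hc' := homotopic_cast h0 rfl γ.target.symm
            have he : (((seg γ (t m) (t (m+1)) hmm1).trans
                (seg γ (t (m+1)) 1 (hle1 (m+1)))).cast rfl γ.target.symm)
                = sg.trans (segc (m+1)) := by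
              ext r; rfl
            rwa [he] at hc'
          have h2 : (segc (m+1)).Homotopic (W'.symm.trans (W'.trans (segc (m+1)))) := by
            have s1 : (segc (m+1)).Homotopic ((Path.refl _).trans (segc (m+1))) :=
              (ht_reflTrans _).symm
            have s2 : ((Path.refl (γ (t (m+1)))).trans (segc (m+1))).Homotopic
                ((W'.symm.trans W').trans (segc (m+1))) :=
              Path.Homotopic.hcomp ⟨Path.Homotopy.reflSymmTrans W'⟩
                (Path.Homotopic.refl _)
            exact (s1.trans s2).trans (ht_assoc _ _ _)
          have s1 : (W.trans (segc m)).Homotopic (W.trans (sg.trans (segc (m+1)))) :=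
            Path.Homotopic.hcomp (Path.Homotopic.refl W) h1
          have s2 : (W.trans (sg.trans (segc (m+1)))).Homotopic
              (W.trans (sg.trans (W'.symm.trans (W'.trans (segc (m+1)))))) :=
            Path.Homotopic.hcomp (Path.Homotopic.refl W)
              (Path.Homotopic.hcomp (Path.Homotopic.refl sg) h2)
          have s3 : (W.trans (sg.trans (W'.symm.trans (W'.trans (segc (m+1)))))).Homotopic
              (W.trans ((sg.trans W'.symm).trans (W'.trans (segc (m+1))))) :=
            Path.Homotopic.hcomp (Path.Homotopic.refl W) (ht_assoc _ _ _).symm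
          have s4 : (W.trans ((sg.trans W'.symm).trans (W'.trans (segc (m+1))))).Homotopic
              ((W.trans (sg.trans W'.symm)).trans (W'.trans (segc (m+1)))) :=
            (ht_assoc _ _ _).symm
          have s5 : ((W.trans (sg.trans W'.symm)).trans (W'.trans (segc (m+1)))).Homotopic
              ((Path.refl x₀).trans (Path.refl x₀)) :=
            Path.Homotopic.hcomp hβ hIH
          exact ((((s1.trans s2).trans s3).trans s4).trans s5).trans (ht_reflTrans _)
        obtain ⟨b, hb⟩ := hsub m
        cases b with
        | true =>
          refine hstep U inferInstance hx₀U (fun p W' h1 _ hp => h1 hp) ?_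
          intro r hr
          have := hb hr
          simpa [hc] using this
        | false =>
          refine hstep V inferInstance hx₀V (fun p W' _ h2 hp => h2 hp) ?_
          intro r hr
          have := hb hr
          simpa [hc] using this
    -- final assembly
    have h0' : γ (t 0) = x₀ := by rw [ht0]; exact γ.source
    set W₀ : Path x₀ (γ (t 0)) := (Path.refl x₀).cast rfl h0' with hW₀
    have hW₀r : Set.range W₀ ⊆ {x₀} := by rintro - ⟨r, rfl⟩; exact rfl
    have hfin := main n₀ 0 (by omega) W₀
      (fun _ => subset_trans hW₀r (Set.singleton_subset_iff.mpr hx₀U))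
      (fun _ => subset_trans hW₀r (Set.singleton_subset_iff.mpr hx₀V))
    set Ecast : Path x₀ x₀ := (segc 0).cast h0'.symm rfl with hEcast
    have hE : W₀.trans (segc 0) = (Path.refl x₀).trans Ecast := by
      ext r; rfl
    have hEγ : Ecast = γ := by
      ext r
      show (seg γ (t 0) 1 (hle1 0)) r = γ r
      rw [seg_apply, ht0]
      rw [show ((0:I):ℝ) = 0 from rfl, show ((1:I):ℝ) = 1 from rfl,
        max_eq_left r.2.1, min_eq_left r.2.2]
      exact γ.extend_extends' r
    have s1 : γ.Homotopic Ecast := by rw [hEγ]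
    have s2 : Ecast.Homotopic ((Path.refl x₀).trans Ecast) := (ht_reflTrans Ecast).symm
    have s3 : ((Path.refl x₀).trans Ecast).Homotopic (W₀.trans (segc 0)) := by rw [hE]
    exact ((s1.trans s2).trans s3).trans hfin
  intro x y p q
  exact paths_homotopic_of_loops key (hXpc.somePath x₀ x) p q


abbrev 𝒮 : Type := {p : ℂ × ℂ × ℂ // p.1 ^ 2 - p.2.1 ^ 2 * p.2.2 = 1}

namespace S10

/-- The chart domain around `x = ε` (with `ε² = 1`). -/
def Uset (ε : ℂ) : Set 𝒮 := {p | p.val.2.1 ≠ 0 ∨ p.val.1 = ε}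

theorem isOpen_Uset (ε : ℂ) (hε : ε ^ 2 = 1) : IsOpen (Uset ε) := by
  have hεne : ε ≠ 0 := by intro h; rw [h] at hε; simp at hε
  rw [← isClosed_compl_iff]
  have hcomp : (Uset ε)ᶜ =
      {p : 𝒮 | p.val.2.1 = 0} ∩ {p : 𝒮 | p.val.1 = -ε} := by
    ext p
    simp only [Uset, Set.mem_compl_iff, Set.mem_setOf_eq, Set.mem_inter_iff, not_or, not_ne_iff]
    constructor
    · rintro ⟨hy, hx⟩
      refine ⟨hy, ?_⟩
      have hc := p.2
      rw [hy] at hc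
      have : (p.val.1 - ε) * (p.val.1 + ε) = 0 := by
        have : p.val.1 ^ 2 = 1 := by linear_combination hc
        linear_combination this - hε
      rcases mul_eq_zero.mp this with h | h
      · exact absurd (by linear_combination h) hx
      · linear_combination h
    · rintro ⟨hy, hx⟩
      refine ⟨hy, ?_⟩
      rw [hx]
      intro h
      apply hεne
      linear_combination (h : -ε = ε) / (-2 : ℂ) * (-2:ℂ)⁻¹ * 0 + (-(1:ℂ)/2) * h
  rw [hcomp]
  have hy : Continuous fun p : 𝒮 => p.val.2.1 := by fun_prop
  have hx : Continuous fun p : 𝒮 => p.val.1 := by fun_prop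
  exact (isClosed_singleton.preimage hy).inter (isClosed_singleton.preimage hx)

/-- Parametrization of the chart. -/
def chart (ε : ℂ) (hε : ε ^ 2 = 1) (q : ℂ × ℂ) : 𝒮 :=
  ⟨(ε + q.2 ^ 2 * q.1, q.2, 2 * ε * q.1 + q.2 ^ 2 * q.1 ^ 2), by
    obtain ⟨t, y⟩ := q
    simp only
    linear_combination hε⟩

theorem chart_mem (ε : ℂ) (hε : ε ^ 2 = 1) (q : ℂ × ℂ) : chart ε hε q ∈ Uset ε := by
  by_cases hy : q.2 = 0
  · right
    show ε + q.2 ^ 2 * q.1 = ε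
    rw [hy]; ring
  · left
    exact hy

/-- Inverse of the chart: recover the parameter `t`. -/
def chartInv (ε : ℂ) (p : 𝒮) : ℂ :=
  if p.val.1 = -ε then (p.val.1 - ε) / p.val.2.1 ^ 2 else p.val.2.2 / (p.val.1 + ε)

theorem homeoU (ε : ℂ) (hε : ε ^ 2 = 1) : Nonempty ((ℂ × ℂ) ≃ₜ (Uset ε)) := by
  have hεne : ε ≠ 0 := by intro h; rw [h] at hε; simp at hε
  have h2ε : (2:ℂ) * ε ≠ 0 := mul_ne_zero two_ne_zero hεne
  refine ⟨{
    toFun := fun q => ⟨chart ε hε q, chart_mem ε hε q⟩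
    invFun := fun p => (chartInv ε p.val, p.val.val.2.1)
    left_inv := ?_
    right_inv := ?_
    continuous_toFun := ?_
    continuous_invFun := ?_ }⟩
  · rintro ⟨t, y⟩
    simp only [chart, chartInv]
    rw [Prod.mk.injEq]
    constructor
    · show (if ε + y ^ 2 * t = -ε then _ else _) = t
      split_ifs with h
      · -- then y ≠ 0
        have hy : y ≠ 0 := by
          intro hy0
          rw [hy0] at h
          apply hεne
          have : ε = -ε := by linear_combination h
          linear_combination this / 2
        show (ε + y ^ 2 * t - ε) / y ^ 2 = t
        field_simp
        ring
      · show (2 * ε * t + y ^ 2 * t ^ 2) / (ε + y ^ 2 * t + ε) = t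
        have hden : ε + y ^ 2 * t + ε ≠ 0 := by
          intro h0
          exact h (by linear_combination h0)
        rw [div_eq_iff hden]
        ring
    · rfl
  · rintro ⟨⟨⟨x, y, z⟩, hc⟩, hU⟩
    have hc' : x ^ 2 - y ^ 2 * z = 1 := hc
    apply Subtype.ext
    apply Subtype.ext
    show (ε + y ^ 2 * chartInv ε _, y, 2 * ε * chartInv ε _ + y ^ 2 * (chartInv ε _) ^ 2)
      = (x, y, z)
    simp only [chartInv]
    split_ifs with h
    · -- x = -ε hence y ≠ 0
      have hx : x = -ε := h
      have hy : y ≠ 0 := by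
        rcases hU with hy | hx1
        · exact hy
        · exfalso
          have hx1' : x = ε := hx1
          exact hεne (by linear_combination (hx - hx1') / 2)
      show (ε + y ^ 2 * ((x - ε) / y ^ 2), y, 2 * ε * ((x - ε) / y ^ 2)
          + y ^ 2 * ((x - ε) / y ^ 2) ^ 2) = (x, y, z)
      have hy2 : y ^ 2 ≠ 0 := pow_ne_zero 2 hy
      rw [Prod.mk.injEq, Prod.mk.injEq]
      refine ⟨by field_simp; ring, rfl, ?_⟩
      have hz : y ^ 2 * z = x ^ 2 - 1 := by linear_combination -hc'
      field_simp
      linear_combination hc' - hε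
    · -- x ≠ -ε
      have hden : x + ε ≠ 0 := fun h0 => h (by linear_combination h0)
      show (ε + y ^ 2 * (z / (x + ε)), y, 2 * ε * (z / (x + ε))
          + y ^ 2 * (z / (x + ε)) ^ 2) = (x, y, z)
      rw [Prod.mk.injEq, Prod.mk.injEq]
      refine ⟨?_, rfl, ?_⟩
      · field_simp
        linear_combination -hc' + hε
      · field_simp
        linear_combination (-z) * hc' + z * hε
  · apply Continuous.subtype_mk
    apply Continuous.subtype_mk
    fun_prop
  · apply Continuous.prodMk
    swap
    · fun_prop
    · -- continuity of chartInv on the subtype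
      rw [continuous_iff_continuousAt]
      intro p
      by_cases hx : p.val.val.1 = -ε
      · -- near p, y ≠ 0, and chartInv = (x-ε)/y²
        have hy : p.val.val.2.1 ≠ 0 := by
          rcases p.2 with hy | hx1
          · exact hy
          · exfalso
            have hx1' : p.val.val.1 = ε := hx1
            exact hεne (by linear_combination (hx - hx1') / 2)
        have hO : IsOpen {q : Uset ε | q.val.val.2.1 ≠ 0} := by
          have : Continuous fun q : Uset ε => q.val.val.2.1 := by fun_prop
          exact (isOpen_compl_singleton).preimage this
        have hcont : ContinuousAt
            (fun q : Uset ε => (q.val.val.1 - ε) / q.val.val.2.1 ^ 2) p := by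
          apply ContinuousAt.div
          · fun_prop
          · fun_prop
          · exact pow_ne_zero 2 hy
        apply hcont.congr
        apply Filter.eventuallyEq_of_mem (hO.mem_nhds hy)
        intro q hq
        symm
        show (fun p : Uset ε => chartInv ε p.val) q
          = (q.val.val.1 - ε) / q.val.val.2.1 ^ 2
        simp only [chartInv]
        split_ifs with h
        · rfl
        · -- q.x ≠ -ε, y ≠ 0 : z/(x+ε) = (x-ε)/y²
          have hden : q.val.val.1 + ε ≠ 0 := fun h0 => h (by linear_combination h0)
          have hq2 : (q.val.val.2.1 : ℂ) ≠ 0 := hq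
          have hcq : q.val.val.1 ^ 2 - q.val.val.2.1 ^ 2 * q.val.val.2.2 = 1 := q.val.2
          field_simp
          linear_combination - hcq + hε
      · have hO : IsOpen {q : Uset ε | q.val.val.1 ≠ -ε} := by
          have : Continuous fun q : Uset ε => q.val.val.1 := by fun_prop
          exact (isOpen_compl_singleton).preimage this
        have hcont : ContinuousAt
            (fun q : Uset ε => q.val.val.2.2 / (q.val.val.1 + ε)) p := by
          apply ContinuousAt.div
          · fun_prop
          · fun_prop
          · exact fun h0 => hx (by linear_combination h0)
        apply hcont.congr
        apply Filter.eventuallyEq_of_mem (hO.mem_nhds hx)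
        intro q hq
        symm
        show (fun p : Uset ε => chartInv ε p.val) q
          = q.val.val.2.2 / (q.val.val.1 + ε)
        simp only [chartInv]
        rw [if_neg hq]

end S10

namespace S10
theorem cover : Uset 1 ∪ Uset (-1) = Set.univ := by
  ext p
  simp only [Set.mem_union, Set.mem_univ, iff_true, Uset, Set.mem_setOf_eq]
  by_cases hy : p.val.2.1 = 0
  · have hc := p.2
    rw [hy] at hc
    have hx2 : p.val.1 ^ 2 = 1 := by linear_combination hc
    have : (p.val.1 - 1) * (p.val.1 + 1) = 0 := by linear_combination hx2
    rcases mul_eq_zero.mp this with h | h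
    · exact Or.inl (Or.inr (by linear_combination h))
    · exact Or.inr (Or.inr (by linear_combination h))
  · exact Or.inl (Or.inl hy)

theorem inter_eq : Uset 1 ∩ Uset (-1) = {p : 𝒮 | p.val.2.1 ≠ 0} := by
  ext p
  simp only [Uset, Set.mem_inter_iff, Set.mem_setOf_eq]
  constructor
  · rintro ⟨h1 | h1, h2 | h2⟩ <;> try assumption
    exfalso
    rw [h1] at h2
    norm_num at h2
  · exact fun h => ⟨Or.inl h, Or.inl h⟩

theorem inter_pathConnected : IsPathConnected (Uset 1 ∩ Uset (-1)) := by
  rw [inter_eq]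
  set G : ℂ × ℂ → 𝒮 := fun q =>
    ⟨(q.2, Complex.exp q.1, (q.2 ^ 2 - 1) * Complex.exp (-(2 * q.1))), by
      simp only
      have he : Complex.exp q.1 ^ 2 * Complex.exp (-(2 * q.1)) = 1 := by
        rw [← Complex.exp_nat_mul, ← Complex.exp_add]
        rw [show (2:ℕ) * q.1 + -(2 * q.1) = 0 by push_cast; ring, Complex.exp_zero]
      linear_combination (1 - q.2 ^ 2) * he⟩ with hG
  have hGc : Continuous G := by
    apply Continuous.subtype_mk
    fun_prop
  have hpc : IsPathConnected (Set.range G) := isPathConnected_range hGc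
  have hrange : Set.range G = {p : 𝒮 | p.val.2.1 ≠ 0} := by
    ext p
    constructor
    · rintro ⟨q, rfl⟩
      exact Complex.exp_ne_zero q.1
    · intro hp
      have hp' : (p.val.2.1 : ℂ) ∈ ({0}ᶜ : Set ℂ) := hp
      rw [← Complex.range_exp] at hp'
      obtain ⟨w, hw⟩ := hp'
      refine ⟨⟨w, p.val.1⟩, ?_⟩
      apply Subtype.ext
      have hc : p.val.1 ^ 2 - p.val.2.1 ^ 2 * p.val.2.2 = 1 := p.2
      have hy : Complex.exp w = p.val.2.1 := hw
      have he : Complex.exp w ^ 2 * Complex.exp (-(2 * w)) = 1 := by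
        rw [← Complex.exp_nat_mul, ← Complex.exp_add]
        rw [show (2:ℕ) * w + -(2 * w) = 0 by push_cast; ring, Complex.exp_zero]
      have hz : (p.val.1 ^ 2 - 1) * Complex.exp (-(2 * w)) = p.val.2.2 := by
        have hyne : (p.val.2.1 : ℂ) ≠ 0 := hp
        have h1 : p.val.1 ^ 2 - 1 = p.val.2.1 ^ 2 * p.val.2.2 := by linear_combination hc
        rw [h1, ← hy]
        have : Complex.exp w ^ 2 * p.val.2.2 * Complex.exp (-(2 * w))
            = (Complex.exp w ^ 2 * Complex.exp (-(2 * w))) * p.val.2.2 := by ring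
        rw [this, he, one_mul]
      show (p.val.1, Complex.exp w, (p.val.1 ^ 2 - 1) * Complex.exp (-(2 * w))) = p.val
      rw [hz, hy]
  rwa [hrange] at hpc

end S10

end Stmt10Aux

end

open Stmt10Aux in
/-- The surface `𝒮 = {(x,y,z) ∈ ℂ³ | x² − y²·z = 1}`, with the subspace
topology from `ℂ³`, is simply connected (path-connected with trivial fundamental group). -/
theorem stmt_10 :
    SimplyConnectedSpace {p : ℂ × ℂ × ℂ // p.1 ^ 2 - p.2.1 ^ 2 * p.2.2 = 1} := by
  haveI h1 : SimplyConnectedSpace (S10.Uset 1) := by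
    obtain ⟨e⟩ := S10.homeoU 1 (by norm_num)
    haveI : ContractibleSpace (S10.Uset 1) := e.contractibleSpace_iff.mp inferInstance
    infer_instance
  haveI h2 : SimplyConnectedSpace (S10.Uset (-1)) := by
    obtain ⟨e⟩ := S10.homeoU (-1) (by norm_num)
    haveI : ContractibleSpace (S10.Uset (-1)) := e.contractibleSpace_iff.mp inferInstance
    infer_instance
  exact simplyConnectedSpace_of_union (S10.Uset 1) (S10.Uset (-1))
    (S10.isOpen_Uset 1 (by norm_num)) (S10.isOpen_Uset (-1) (by norm_num))
    S10.cover S10.inter_pathConnected
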